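/- Under the sufficient-decrease condition established for PGM with γ ∈ (0, 1/(τL)), if f = g + τh is coercive, then the sequence of iterates (xᵏ) is bounded and every accumulation point x̄ satisfies x̄ = prox_{γg}(x̄ − γτ∇h(x̄)). -/

import Mathlib

open Filter

open scoped RealInnerProductSpace

local notation "E" n => EuclideanSpace ℝ (Fin n)

/-- Descent lemma for a function with `L`-Lipschitz gradient. -/
lemma pgm_descent_lemma {n : ℕ} (h : EuclideanSpace ℝ (Fin n) → ℝ)
    (h' : EuclideanSpace ℝ (Fin n) → EuclideanSpace ℝ (Fin n))
    (hdiff : ∀ x, HasGradientAt h (h' x) x) (L : ℝ) (hL : 0 < L)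
    (hlip : ∀ x z, ‖h' x - h' z‖ ≤ L * ‖x - z‖) (a p : EuclideanSpace ℝ (Fin n)) :
    h p ≤ h a + ⟪h' a, p - a⟫ + L / 2 * ‖p - a‖ ^ 2 := by
  set v := p - a with hv
  set c1 : ℝ := ⟪h' a, v⟫ with hc1
  set ψ : ℝ → ℝ := fun s => h (a + s • v) - s * c1 - L * ‖v‖ ^ 2 / 2 * s ^ 2 with hψdef
  have curve : ∀ t : ℝ, HasDerivAt (fun s : ℝ => a + s • v) v t := by
    intro t
    simpa using ((hasDerivAt_id t).smul_const v).const_add a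
  have hcomp : ∀ t : ℝ, HasDerivAt (fun s : ℝ => h (a + s • v)) ⟪h' (a + t • v), v⟫ t := by
    intro t
    have := ((hdiff (a + t • v)).hasFDerivAt).comp_hasDerivAt t (curve t)
    simp [InnerProductSpace.toDual_apply_apply] at this; exact this
  have hψ : ∀ t : ℝ, HasDerivAt ψ (⟪h' (a + t • v), v⟫ - c1 - L * ‖v‖ ^ 2 * t) t := by
    intro t
    have := ((hcomp t).sub ((hasDerivAt_id t).mul_const c1)).sub
      ((hasDerivAt_pow 2 t).const_mul (L * ‖v‖ ^ 2 / 2))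
    convert this using 1
    · rfl
    · rfl
    · rfl
    · norm_num
      ring
  have hanti : AntitoneOn ψ (Set.Icc (0 : ℝ) 1) := by
    apply antitoneOn_of_deriv_nonpos (convex_Icc 0 1)
    · exact (continuous_iff_continuousAt.mpr fun t => (hψ t).continuousAt).continuousOn
    · intro t _
      exact ((hψ t).differentiableAt).differentiableWithinAt
    · intro t ht
      rw [interior_Icc] at ht
      rw [(hψ t).deriv]
      have h1 : ⟪h' (a + t • v), v⟫ - c1 = ⟪h' (a + t • v) - h' a, v⟫ := by
        rw [inner_sub_left]
      have h2 : ⟪h' (a + t • v) - h' a, v⟫ ≤ ‖h' (a + t • v) - h' a‖ * ‖v‖ :=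
        real_inner_le_norm _ _
      have h3 : ‖h' (a + t • v) - h' a‖ ≤ L * ‖t • v‖ := by
        have := hlip (a + t • v) a
        simpa using this
      have h4 : ‖t • v‖ = t * ‖v‖ := by
        rw [norm_smul, Real.norm_eq_abs, abs_of_pos ht.1]
      have h5 : ⟪h' (a + t • v) - h' a, v⟫ ≤ L * ‖v‖ ^ 2 * t := by
        calc ⟪h' (a + t • v) - h' a, v⟫ ≤ ‖h' (a + t • v) - h' a‖ * ‖v‖ := h2
          _ ≤ L * ‖t • v‖ * ‖v‖ := mul_le_mul_of_nonneg_right h3 (norm_nonneg v)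
          _ = L * ‖v‖ ^ 2 * t := by rw [h4]; ring
      linarith [h1, h5]
  have := hanti (Set.mem_Icc.mpr ⟨le_refl 0, zero_le_one⟩)
    (Set.mem_Icc.mpr ⟨zero_le_one, le_refl 1⟩) zero_le_one
  have hψ0 : ψ 0 = h a := by simp [hψdef]
  have hψ1 : ψ 1 = h p - c1 - L * ‖v‖ ^ 2 / 2 := by
    simp [hψdef, hv]
  rw [hψ0, hψ1] at this
  linarith

set_option maxHeartbeats 1000000 in
/-- PGM with `γ ∈ (0, 1/(τL))` and coercive `f = g + τh`: the iterates are bounded and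
every accumulation point `x̄` is a fixed point of the proximal gradient map, i.e.,
`x̄` minimizes the prox objective at `x̄ − γτ∇h(x̄)`. -/
theorem pgm_bounded_and_cluster_points_fixed (n : ℕ)
    (g : EuclideanSpace ℝ (Fin n) → ℝ)
    (hg_conv : ConvexOn ℝ Set.univ g) (hg_lsc : LowerSemicontinuous g)
    (h : EuclideanSpace ℝ (Fin n) → ℝ)
    (h' : EuclideanSpace ℝ (Fin n) → EuclideanSpace ℝ (Fin n))
    (hdiff : ∀ x, HasGradientAt h (h' x) x)
    (L τ γ : ℝ) (hL : 0 < L) (hτ : 0 < τ) (hγ : 0 < γ) (hγlt : γ < 1 / (τ * L))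
    (hlip : ∀ x z, ‖h' x - h' z‖ ≤ L * ‖x - z‖)
    (f : EuclideanSpace ℝ (Fin n) → ℝ) (hf : ∀ x, f x = g x + τ * h x)
    (hcoercive : ∀ M : ℝ, ∃ r : ℝ, ∀ x, r ≤ ‖x‖ → M ≤ f x)
    (x : ℕ → EuclideanSpace ℝ (Fin n))
    (hiter : ∀ k : ℕ,
      IsMinOn (fun u => (1/2) * ‖u - (x k - (γ * τ) • h' (x k))‖ ^ 2 + γ * g u)
        Set.univ (x (k + 1))) :
    (∃ R : ℝ, ∀ k, ‖x k‖ ≤ R) ∧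
      ∀ xb : EuclideanSpace ℝ (Fin n),
        (∃ φ : ℕ → ℕ, StrictMono φ ∧ Tendsto (fun j => x (φ j)) atTop (nhds xb)) →
        IsMinOn (fun u => (1/2) * ‖u - (xb - (γ * τ) • h' xb)‖ ^ 2 + γ * g u)
          Set.univ xb := by
  -- continuity facts
  have hgc : Continuous g := by
    rw [← continuousOn_univ]
    exact hg_conv.continuousOn isOpen_univ
  have hh'c : Continuous h' := by
    have : LipschitzWith (Real.toNNReal L) h' := by
      apply LipschitzWith.of_dist_le_mul
      intro a b
      simp only [dist_eq_norm, Real.coe_toNNReal _ hL.le]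
      exact hlip a b
    exact this.continuous
  have hhc : Continuous h := continuous_iff_continuousAt.mpr fun z => (hdiff z).continuousAt
  have hfc : Continuous f := by
    have : Continuous fun z => g z + τ * h z := hgc.add (continuous_const.mul hhc)
    convert this using 1
    funext z; exact hf z
  -- sufficient decrease
  set c : ℝ := 1 / (2 * γ) - τ * L / 2 with hc
  have hcpos : 0 < c := by
    rw [hc]
    rw [lt_div_iff₀ (by positivity)] at hγlt
    have h1 : τ * L < 1 / γ := by
      rw [lt_div_iff₀ hγ]
      linarith [mul_comm γ (τ * L)]
    have : 1 / (2 * γ) = (1 / γ) / 2 := by ring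
    linarith
  have key : ∀ k, f (x (k + 1)) + c * ‖x (k + 1) - x k‖ ^ 2 ≤ f (x k) := by
    intro k
    set a := x k with ha
    set p := x (k + 1) with hp
    set w := h' a with hw
    set d := p - a with hd
    have hmin := isMinOn_iff.mp (hiter k) a (Set.mem_univ a)
    have e1 : a - (a - (γ * τ) • w) = (γ * τ) • w := by abel
    have e2 : p - (a - (γ * τ) • w) = d + (γ * τ) • w := by rw [hd]; abel
    rw [e1, e2] at hmin
    have e3 : ‖d + (γ * τ) • w‖ ^ 2
        = ‖d‖ ^ 2 + 2 * ((γ * τ) * ⟪d, w⟫) + (γ * τ) ^ 2 * ‖w‖ ^ 2 := by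
      rw [norm_add_sq_real, real_inner_smul_right, norm_smul, Real.norm_eq_abs,
        abs_of_pos (by positivity : (0:ℝ) < γ * τ), mul_pow]
    have e4 : ‖(γ * τ) • w‖ ^ 2 = (γ * τ) ^ 2 * ‖w‖ ^ 2 := by
      rw [norm_smul, Real.norm_eq_abs, abs_of_pos (by positivity : (0:ℝ) < γ * τ), mul_pow]
    rw [e3, e4] at hmin
    -- hmin : 1/2 * (...) + γ * g p ≤ 1/2 * ((γτ)²‖w‖²) + γ * g a
    have hg_ineq : γ * g p ≤ γ * g a - γ * τ * ⟪d, w⟫ - 1 / 2 * ‖d‖ ^ 2 := by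
      linarith [hmin]
    have hg2 : g p ≤ g a - τ * ⟪d, w⟫ - 1 / (2 * γ) * ‖d‖ ^ 2 := by
      rw [← mul_le_mul_iff_right₀ hγ]
      have expand : γ * (g a - τ * ⟪d, w⟫ - 1 / (2 * γ) * ‖d‖ ^ 2)
          = γ * g a - γ * τ * ⟪d, w⟫ - 1 / 2 * ‖d‖ ^ 2 := by
        field_simp
      rw [expand]
      exact hg_ineq
    have hh_ineq : h p ≤ h a + ⟪w, d⟫ + L / 2 * ‖d‖ ^ 2 :=
      pgm_descent_lemma h h' hdiff L hL hlip a p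
    have hinner : ⟪w, d⟫ = ⟪d, w⟫ := real_inner_comm _ _
    rw [hf, hf, hc]
    rw [hinner] at hh_ineq
    nlinarith [hg2, mul_le_mul_of_nonneg_left hh_ineq hτ.le]
  have hdec : ∀ k, f (x (k + 1)) ≤ f (x k) := by
    intro k
    have := key k
    nlinarith [sq_nonneg ‖x (k + 1) - x k‖, hcpos.le]
  have hmono : ∀ k, f (x k) ≤ f (x 0) := by
    intro k
    induction k with
    | zero => exact le_refl _
    | succ m ih => exact le_trans (hdec m) ih
  -- boundedness
  obtain ⟨r, hr⟩ := hcoercive (f (x 0) + 1)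
  have hbdd : ∀ k, ‖x k‖ ≤ r := by
    intro k
    by_contra hcon
    push_neg at hcon
    have := hr (x k) hcon.le
    linarith [hmono k]
  refine ⟨⟨r, hbdd⟩, ?_⟩
  -- lower bound for f on the ball
  have hrnn : (0:ℝ) ≤ r := le_trans (norm_nonneg _) (hbdd 0)
  obtain ⟨m, hm, hmin_m⟩ := (isCompact_closedBall (0 : EuclideanSpace ℝ (Fin n)) r).exists_isMinOn
    ⟨x 0, by simpa [Metric.mem_closedBall, dist_eq_norm] using hbdd 0⟩ hfc.continuousOn
  have hlb : ∀ k, f m ≤ f (x k) := by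
    intro k
    exact isMinOn_iff.mp hmin_m (x k) (by simpa [Metric.mem_closedBall, dist_eq_norm] using hbdd k)
  -- f (x k) converges
  have hanti : Antitone fun k => f (x k) := antitone_nat_of_succ_le hdec
  have hbelow : BddBelow (Set.range fun k => f (x k)) := ⟨f m, by rintro _ ⟨k, rfl⟩; exact hlb k⟩
  have htend : Tendsto (fun k => f (x k)) atTop (nhds (⨅ k, f (x k))) :=
    tendsto_atTop_ciInf hanti hbelow
  have htend' : Tendsto (fun k => f (x (k + 1))) atTop (nhds (⨅ k, f (x k))) :=
    htend.comp (tendsto_add_atTop_nat 1)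
  have hdiff0 : Tendsto (fun k => f (x k) - f (x (k + 1))) atTop (nhds 0) := by
    simpa using htend.sub htend'
  -- ‖x (k+1) - x k‖ → 0
  have hnorm2 : Tendsto (fun k => ‖x (k + 1) - x k‖ ^ 2) atTop (nhds 0) := by
    have hsq : ∀ k, c * ‖x (k + 1) - x k‖ ^ 2 ≤ f (x k) - f (x (k + 1)) := by
      intro k; linarith [key k]
    have hle : ∀ k, ‖x (k + 1) - x k‖ ^ 2 ≤ (f (x k) - f (x (k + 1))) / c := by
      intro k
      rw [le_div_iff₀ hcpos]
      linarith [hsq k, mul_comm c (‖x (k + 1) - x k‖ ^ 2)]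
    have : Tendsto (fun k => (f (x k) - f (x (k + 1))) / c) atTop (nhds 0) := by
      simpa using hdiff0.div_const c
    exact squeeze_zero (fun k => sq_nonneg _) hle this
  have hnorm : Tendsto (fun k => ‖x (k + 1) - x k‖) atTop (nhds 0) := by
    have h0 := (Real.continuous_sqrt.tendsto 0).comp hnorm2
    have heq : (fun k => ‖x (k + 1) - x k‖)
        = (fun t => Real.sqrt t) ∘ fun k => ‖x (k + 1) - x k‖ ^ 2 := by
      funext k
      simp [Function.comp, Real.sqrt_sq (norm_nonneg _)]
    rw [heq]
    simpa using h0
  have hdvec : Tendsto (fun k => x (k + 1) - x k) atTop (nhds 0) :=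
    tendsto_zero_iff_norm_tendsto_zero.mpr hnorm
  -- cluster point argument
  rintro xb ⟨φ, hφ, hxφ⟩
  have hxφ1 : Tendsto (fun j => x (φ j + 1)) atTop (nhds xb) := by
    have h1 : Tendsto (fun j => x (φ j + 1) - x (φ j)) atTop (nhds 0) :=
      hdvec.comp hφ.tendsto_atTop
    have := h1.add hxφ
    simpa using this
  rw [isMinOn_iff]
  intro u _
  set Φ : EuclideanSpace ℝ (Fin n) × EuclideanSpace ℝ (Fin n) → ℝ :=
    fun pq => (1/2) * ‖pq.1 - (pq.2 - (γ * τ) • h' pq.2)‖ ^ 2 + γ * g pq.1 with hΦ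
  have hΦc : Continuous Φ := by
    apply Continuous.add
    · apply Continuous.mul continuous_const
      apply Continuous.pow
      exact ((continuous_fst.sub (continuous_snd.sub
        ((continuous_const (y := γ * τ)).smul (hh'c.comp continuous_snd)))).norm :)
    · exact continuous_const.mul (hgc.comp continuous_fst)
  have hineq : ∀ j, Φ (x (φ j + 1), x (φ j)) ≤ Φ (u, x (φ j)) :=
    fun j => isMinOn_iff.mp (hiter (φ j)) u (Set.mem_univ u)
  have hl : Tendsto (fun j => Φ (x (φ j + 1), x (φ j))) atTop (nhds (Φ (xb, xb))) :=
    (hΦc.tendsto _).comp (hxφ1.prodMk_nhds hxφ)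
  have hrt : Tendsto (fun j => Φ (u, x (φ j))) atTop (nhds (Φ (u, xb))) :=
    (hΦc.tendsto _).comp (tendsto_const_nhds.prodMk_nhds hxφ)
  have hfinal : Φ (xb, xb) ≤ Φ (u, xb) := le_of_tendsto_of_tendsto' hl hrt hineq
  simpa [hΦ] using hfinal
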